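/- Let F be a field, let d, k ≥ 1, and let f_1, …, f_k ∈ F[[z_1,…,z_d]] (multivariate formal power series, MvPowerSeries (Fin d) F) be linearly independent over F. For each exponent multi-index m ∈ (Fin d →₀ ℕ) define the coefficient vector a(m) ∈ F^k by a(m)_i := the coefficient of z^m in f_i. Order the exponents by the lexicographic order on Fin d →₀ ℕ. Then there exist exponents m_1 <_lex m_2 <_lex ⋯ <_lex m_k such that the vectors a(m_1), …, a(m_k) are linearly independent over F, and moreover for every exponent m, the vector a(m) lies in the span of { a(m_β) : 1 ≤ β ≤ k, m_β ≤_lex m }. -/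

import Mathlib

open Finset Matrix

noncomputable section

/-- The intersection `⋂_{j ∈ p} A j`, as a `Finset (Fin n)`. -/
def interSet {ℓ n : ℕ} (A : Fin ℓ → Finset (Fin n)) (p : Finset (Fin ℓ)) : Finset (Fin n) :=
  Finset.univ.filter fun x => ∀ j ∈ p, x ∈ A j

/-- The dimension-`m` null intersection property: for every partition of `{1,…,ℓ}`
(presented as a `Finpartition` of `Finset.univ : Finset (Fin ℓ)`) into nonempty parts
`P_1,…,P_s`, we have `Σ_i |⋂_{j ∈ P_i} A_j| ≤ (s-1)·m`. -/
def NullInter {ℓ n : ℕ} (m : ℕ) (A : Fin ℓ → Finset (Fin n)) : Prop :=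
  ∀ P : Finpartition (Finset.univ : Finset (Fin ℓ)),
    ∑ p ∈ P.parts, (interSet A p).card ≤ (P.parts.card - 1) * m

/-- Span of the columns of `M` indexed by `A`. -/
def colSpan {K : Type*} [Field K] {k n : ℕ} (M : Matrix (Fin k) (Fin n) K)
    (A : Finset (Fin n)) : Submodule K (Fin k → K) :=
  Submodule.span K ((fun j i => M i j) '' (A : Set (Fin n)))

/-- Span of the first `σ` columns of `M`. -/
def colSpanLT {K : Type*} [Field K] {k b : ℕ} (M : Matrix (Fin k) (Fin b) K)
    (σ : ℕ) : Submodule K (Fin k → K) :=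
  Submodule.span K ((fun j i => M i j) '' {j : Fin b | (j : ℕ) < σ})

/-- The minimum of `σ` over the set `p` (for nonempty `p`, this is `min_{j ∈ p} σ j`). -/
def partMin {ℓ : ℕ} (σ : Fin ℓ → ℕ) (p : Finset (Fin ℓ)) : ℕ :=
  sInf (σ '' (p : Set (Fin ℓ)))

/-- The generic intersection dimension `gid_m((σ_i, A_i)_i)`: the maximum over all
partitions of `{1,…,ℓ}` into nonempty parts `P_1,…,P_s` of
`-m(s-1) + Σ_i (min_{j ∈ P_i} σ_j + |⋂_{j ∈ P_i} A_j|)`. -/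
def gid {ℓ n : ℕ} (m : ℕ) (σ : Fin ℓ → ℕ) (A : Fin ℓ → Finset (Fin n)) : ℤ :=
  sSup { v : ℤ | ∃ P : Finpartition (Finset.univ : Finset (Fin ℓ)),
    v = -(m : ℤ) * ((P.parts.card : ℤ) - 1)
      + ∑ p ∈ P.parts, ((partMin σ p : ℤ) + ((interSet A p).card : ℤ)) }


lemma linearIndependent_of_not_mem_span_Iio' {K V ι : Type*} [Field K] [AddCommGroup V]
    [Module K V] [LinearOrder ι] {v : ι → V}
    (h : ∀ i, v i ∉ Submodule.span K (v '' Set.Iio i)) : LinearIndependent K v := by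
  rw [linearIndependent_iff']
  intro t g hsum
  by_contra hcon
  push_neg at hcon
  obtain ⟨i₁, hi₁t, hi₁⟩ := hcon
  classical
  set t' := t.filter (fun i => g i ≠ 0) with ht'
  have ht'ne : t'.Nonempty := ⟨i₁, Finset.mem_filter.2 ⟨hi₁t, hi₁⟩⟩
  set i0 := t'.max' ht'ne with hi0
  have hi0t' : i0 ∈ t' := t'.max'_mem ht'ne
  have hg0 : g i0 ≠ 0 := (Finset.mem_filter.1 hi0t').2
  have hsum' : ∑ i ∈ t', g i • v i = 0 := by
    rw [← hsum]
    exact Finset.sum_filter_of_ne (fun i _ hne h0 => hne (by rw [h0, zero_smul]))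
  have hkey : g i0 • v i0 = -∑ i ∈ t'.erase i0, g i • v i := by
    rw [eq_neg_iff_add_eq_zero, ← hsum']
    exact Finset.add_sum_erase t' (fun i => g i • v i) hi0t'
  apply h i0
  have : v i0 = (g i0)⁻¹ • (-∑ i ∈ t'.erase i0, g i • v i) := by
    rw [← hkey, inv_smul_smul₀ hg0]
  rw [this]
  refine Submodule.smul_mem _ _ (Submodule.neg_mem _ (Submodule.sum_mem _ fun i hi => ?_))
  refine Submodule.smul_mem _ _ (Submodule.subset_span ⟨i, ?_, rfl⟩)
  have hit' := Finset.mem_of_mem_erase hi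
  exact lt_of_le_of_ne (Finset.le_max' t' i hit') (Finset.ne_of_mem_erase hi)

/-- Leading-coefficient structure of linearly independent power series: there are
lexicographically increasing exponents `m_1 < ⋯ < m_k` whose coefficient vectors are
linearly independent, and every coefficient vector lies in the span of those coefficient
vectors with lexicographically smaller or equal exponent. -/
theorem power_series_leading_coefficients
    (F : Type*) [Field F] (d k : ℕ) (hd : 1 ≤ d) (hk : 1 ≤ k)
    (f : Fin k → MvPowerSeries (Fin d) F) (hf : LinearIndependent F f) :
    ∃ m : Fin k → (Fin d →₀ ℕ),
      StrictMono (fun β => toLex (m β)) ∧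
      LinearIndependent F (fun β => fun i => MvPowerSeries.coeff (m β) (f i)) ∧
      ∀ m' : Fin d →₀ ℕ,
        (fun i => MvPowerSeries.coeff m' (f i)) ∈
          Submodule.span F
            ((fun β => fun i => MvPowerSeries.coeff (m β) (f i)) ''
              {β : Fin k | toLex (m β) ≤ toLex m'}) := by
  classical
  set a : Lex (Fin d →₀ ℕ) → (Fin k → F) :=
    fun x i => MvPowerSeries.coeff (ofLex x) (f i) with ha
  -- Step A: the coefficient vectors span everything
  have hspan_top : Submodule.span F (Set.range a) = ⊤ := by
    by_contra hne
    obtain ⟨φ, hφ0, hφ⟩ := Submodule.exists_dual_map_eq_bot_of_lt_top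
      (lt_top_iff_ne_top.2 hne) inferInstance
    have hker : ∀ y ∈ Submodule.span F (Set.range a), φ y = 0 := fun y hy => by
      have h0 : φ y ∈ (⊥ : Submodule F F) := hφ ▸ Submodule.mem_map_of_mem hy
      exact (Submodule.mem_bot F).1 h0
    set c : Fin k → F := fun i => φ (fun j => if i = j then 1 else 0) with hc
    have hzero : ∑ i, c i • f i = 0 := by
      apply MvPowerSeries.ext
      intro n
      have h1 : MvPowerSeries.coeff n (∑ i, c i • f i)
          = ∑ i, c i * MvPowerSeries.coeff n (f i) := by
        rw [map_sum]
        exact Finset.sum_congr rfl fun i _ => by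
          rw [_root_.map_smul, smul_eq_mul]
      have h2 : φ (a (toLex n)) = 0 := hker _ (Submodule.subset_span ⟨toLex n, rfl⟩)
      rw [LinearMap.pi_apply_eq_sum_univ φ (a (toLex n))] at h2
      rw [h1, map_zero]
      rw [← h2]
      exact Finset.sum_congr rfl fun i _ => by rw [smul_eq_mul, mul_comm]; rfl
    have hc0 : ∀ i, c i = 0 := Fintype.linearIndependent_iff.1 hf c hzero
    apply hφ0
    apply LinearMap.ext
    intro x
    rw [LinearMap.pi_apply_eq_sum_univ φ x]
    have hz : ∀ i, φ (fun j => if i = j then 1 else 0) = 0 := hc0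
    simp [hz]
  -- Step B: the set of "new direction" exponents
  set s : Set (Lex (Fin d →₀ ℕ)) := {x | a x ∉ Submodule.span F (a '' Set.Iio x)} with hs
  have hindep : LinearIndependent F (fun x : s => a x) := by
    apply linearIndependent_of_not_mem_span_Iio'
    intro x hx
    apply x.2
    refine Submodule.span_mono ?_ hx
    rintro _ ⟨y, hy, rfl⟩
    exact ⟨y, hy, rfl⟩
  have hsfin : s.Finite := Set.finite_coe_iff.1 hindep.finite
  -- Step B3: every coefficient vector is in the span of earlier elements of s
  have hmem : ∀ x : Lex (Fin d →₀ ℕ),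
      a x ∈ Submodule.span F (a '' (s ∩ Set.Iic x)) := by
    intro x
    induction x using WellFoundedLT.induction with
    | _ x ih =>
      by_cases hx : x ∈ s
      · exact Submodule.subset_span ⟨x, ⟨hx, le_refl x⟩, rfl⟩
      · have hx' : a x ∈ Submodule.span F (a '' Set.Iio x) := not_not.1 hx
        have hle : Submodule.span F (a '' Set.Iio x)
            ≤ Submodule.span F (a '' (s ∩ Set.Iic x)) := by
          rw [Submodule.span_le]
          rintro _ ⟨y, hy, rfl⟩
          refine Submodule.span_mono (Set.image_mono ?_) (ih y hy)
          exact Set.inter_subset_inter_right _ (Set.Iic_subset_Iic.2 hy.le)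
        exact hle hx'
  -- Step B4: span of s is everything
  have hspan_s : Submodule.span F (a '' s) = ⊤ := by
    rw [eq_top_iff, ← hspan_top, Submodule.span_le]
    rintro _ ⟨x, rfl⟩
    exact Submodule.span_mono (Set.image_mono Set.inter_subset_left) (hmem x)
  -- Step B5: s has exactly k elements
  haveI : Fintype s := hsfin.fintype
  have hbasis : Module.Basis s F (Fin k → F) := Module.Basis.mk hindep (by
    rw [← Set.image_eq_range a s, hspan_s])
  have hcard : Fintype.card s = k := by
    rw [← Module.finrank_eq_card_basis hbasis, Module.finrank_fin_fun]
  -- Step C: enumerate s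
  have hcard' : hsfin.toFinset.card = k := by
    rw [Set.Finite.card_toFinset]; exact hcard
  set e := hsfin.toFinset.orderIsoOfFin hcard' with he
  refine ⟨fun β => ofLex (e β : Lex (Fin d →₀ ℕ)), ?_, ?_, ?_⟩
  · intro β γ hβγ
    exact Subtype.coe_lt_coe.2 (e.strictMono hβγ)
  · have hg : ∀ β : Fin k, (e β : Lex (Fin d →₀ ℕ)) ∈ s := fun β =>
      hsfin.mem_toFinset.1 (e β).2
    have := hindep.comp (fun β : Fin k => (⟨e β, hg β⟩ : s))
      (fun β γ h => by
        have h2 := congrArg Subtype.val h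
        exact e.injective (Subtype.ext h2))
    exact this
  · intro m'
    have h1 := hmem (toLex m')
    refine Submodule.span_mono ?_ h1
    rintro _ ⟨x, ⟨hxs, hxle⟩, rfl⟩
    obtain ⟨β, hβ⟩ := e.surjective ⟨x, hsfin.mem_toFinset.2 hxs⟩
    have hx : (e β : Lex (Fin d →₀ ℕ)) = x := congrArg Subtype.val hβ
    refine ⟨β, ?_, ?_⟩
    · show (e β : Lex (Fin d →₀ ℕ)) ≤ toLex m'
      rw [hx]; exact hxle
    · show a ((e β : { x // x ∈ hsfin.toFinset }) : Lex (Fin d →₀ ℕ)) = a x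
      rw [hx]
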